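/- Let d > 0 be a squarefree integer, let 𝔞 be a nonzero ideal of ℤ[√−d], and let C be a finite subset of 𝔞. Then 𝔞 \ C is fractionally dense in ℂ, i.e. the quotient set R(𝔞 \ C) = {x/y : x, y ∈ 𝔞 \ C, y ≠ 0} is dense in ℂ (under the embedding of ℤ[√−d] into ℂ sending a + b√−d to a + b√d·i). -/

import Mathlib

lemma approx_aux (s : ℝ) (hs : 0 < s) (z : ℂ) (ε : ℝ) (hε : 0 < ε) :
    ∃ (m n : ℤ) (k : ℕ), 0 < k ∧ ¬(m = 0 ∧ n = 0) ∧
      ‖((m : ℂ) + (n : ℂ) * (s * Complex.I)) / (k : ℂ) - z‖ < ε := by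
  obtain ⟨k, hk⟩ := exists_nat_gt ((3 + s) / ε)
  have hk0 : 0 < (k : ℝ) := lt_of_le_of_lt (by positivity) hk
  have hkn : 0 < k := by exact_mod_cast hk0
  have hkC : ((k : ℂ)) ≠ 0 := by exact_mod_cast (ne_of_gt hk0)
  have hkε : (3 + s) / (k:ℝ) < ε := by
    rw [div_lt_iff₀ hk0]
    have h2 := (div_lt_iff₀ hε).mp hk
    nlinarith
  set m := round (z.re * k) with hmdef
  set n := round (z.im * k / s) with hndef
  have hm : |(m : ℝ) - z.re * k| ≤ 1/2 := by rw [abs_sub_comm]; exact abs_sub_round _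
  have hn : |(n:ℝ) - z.im * k / s| ≤ 1/2 := by rw [abs_sub_comm]; exact abs_sub_round _
  by_cases h0 : m = 0 ∧ n = 0
  · refine ⟨1, 0, k, hkn, by simp, ?_⟩
    have hre : |z.re| ≤ 1/(2*k) := by
      have h1 := hm; rw [h0.1] at h1
      have h2 : |z.re| * k ≤ 1/2 := by
        have := h1
        rw [Int.cast_zero, zero_sub, abs_neg, abs_mul, abs_of_pos hk0] at this
        exact this
      rw [le_div_iff₀ (by positivity)]; nlinarith
    have him : |z.im| ≤ s/(2*k) := by
      have h1 := hn; rw [h0.2] at h1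
      have h2 : |z.im| * k / s ≤ 1/2 := by
        have := h1
        rw [Int.cast_zero, zero_sub, abs_neg, abs_div, abs_mul, abs_of_pos hk0,
          abs_of_pos hs] at this
        exact this
      rw [le_div_iff₀ (by positivity)]
      have := (div_le_iff₀ hs).mp h2
      nlinarith
    have habsz : ‖z‖ ≤ (1+s)/(2*k) := by
      calc ‖z‖ ≤ |z.re| + |z.im| := Complex.norm_le_abs_re_add_abs_im z
        _ ≤ 1/(2*k) + s/(2*k) := add_le_add hre him
        _ = (1+s)/(2*k) := by ring
    have hW : (((1:ℤ) : ℂ) + ((0:ℤ) : ℂ) * (s * Complex.I)) / (k : ℂ) = (((1:ℝ)/k : ℝ) : ℂ) := by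
      push_cast; ring
    have htri : ‖(((1:ℤ) : ℂ) + ((0:ℤ) : ℂ) * (s * Complex.I)) / (k : ℂ) - z‖
        ≤ ‖(((1:ℤ) : ℂ) + ((0:ℤ) : ℂ) * (s * Complex.I)) / (k : ℂ)‖ + ‖z‖ := by
      simpa [sub_eq_add_neg] using
        norm_add_le ((((1:ℤ) : ℂ) + ((0:ℤ) : ℂ) * (s * Complex.I)) / (k : ℂ)) (-z)
    have hWabs : ‖(((1:ℤ) : ℂ) + ((0:ℤ) : ℂ) * (s * Complex.I)) / (k : ℂ)‖ = 1/k := by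
      rw [hW, Complex.norm_real, Real.norm_eq_abs, abs_of_pos (by positivity)]
    calc ‖_‖ ≤ 1/k + (1+s)/(2*k) := by rw [← hWabs]; exact htri.trans (by linarith)
      _ ≤ (3+s)/k := by rw [div_add_div _ _ (ne_of_gt hk0) (by positivity), div_le_div_iff₀ (by positivity) hk0]; ring_nf; nlinarith
      _ < ε := hkε
  · refine ⟨m, n, k, hkn, h0, ?_⟩
    have hw : ((m : ℂ) + (n : ℂ) * (s * Complex.I)) / (k : ℂ) - z
        = (((m:ℝ)/k - z.re : ℝ) : ℂ) + (((n:ℝ)*s/k - z.im : ℝ) : ℂ) * Complex.I := by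
      have hk' : (k:ℝ) ≠ 0 := ne_of_gt hk0
      apply Complex.ext <;>
        (push_cast;
         simp [Complex.div_re, Complex.div_im, Complex.normSq_apply])
    rw [hw]
    have h1 : |(m:ℝ)/k - z.re| ≤ 1/(2*k) := by
      have he : (m:ℝ)/k - z.re = ((m:ℝ) - z.re * k)/k := by field_simp
      rw [he, abs_div, abs_of_pos hk0, div_le_div_iff₀ hk0 (by positivity)]
      nlinarith
    have h2 : |(n:ℝ)*s/k - z.im| ≤ s/(2*k) := by
      have he : (n:ℝ)*s/k - z.im = ((n:ℝ) - z.im * k / s) * s / k := by field_simp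
      rw [he, abs_div, abs_of_pos hk0, abs_mul, abs_of_pos hs,
        div_le_div_iff₀ hk0 (by positivity)]
      nlinarith [mul_le_mul_of_nonneg_right hn (by positivity : (0:ℝ) ≤ s * (2*k))]
    calc ‖_‖ ≤ ‖((((m:ℝ)/k - z.re : ℝ) : ℂ))‖
          + ‖((((n:ℝ)*s/k - z.im : ℝ) : ℂ) * Complex.I)‖ := norm_add_le _ _
      _ = |(m:ℝ)/k - z.re| + |(n:ℝ)*s/k - z.im| := by
          rw [norm_mul, Complex.norm_I, mul_one, Complex.norm_real, Complex.norm_real,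
            Real.norm_eq_abs, Real.norm_eq_abs]
      _ ≤ 1/(2*k) + s/(2*k) := add_le_add h1 h2
      _ = (1+s)/(2*k) := by ring
      _ < ε := by
          calc (1 + s)/(2*k) ≤ (3+s)/k := by
                rw [div_le_div_iff₀ (by positivity) hk0]; nlinarith
            _ < ε := hkε


/-- Removing a finite subset `C` from a nonzero ideal `𝔞` of `ℤ[√-d]`
(realized as the subring of `ℂ` generated by `√d * I`, with `d > 0` squarefree)
leaves a set that is fractionally dense in `ℂ`. -/
theorem stmt_12 (d : ℕ) (hd : 0 < d) (hsq : Squarefree d)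
    (𝔞 : Ideal ↥(Subring.closure {((Real.sqrt d : ℂ) * Complex.I)}))
    (h𝔞 : 𝔞 ≠ ⊥)
    (C : Set ↥(Subring.closure {((Real.sqrt d : ℂ) * Complex.I)}))
    (hC : C.Finite)
    (hCsub : C ⊆ (𝔞 : Set ↥(Subring.closure {((Real.sqrt d : ℂ) * Complex.I)}))) :
    Dense {z : ℂ | ∃ x ∈ (𝔞 : Set ↥(Subring.closure {((Real.sqrt d : ℂ) * Complex.I)})) \ C,
      ∃ y ∈ (𝔞 : Set ↥(Subring.closure {((Real.sqrt d : ℂ) * Complex.I)})) \ C,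
        (y : ℂ) ≠ 0 ∧ z = (x : ℂ) / (y : ℂ)} := by
  rw [Metric.dense_iff]
  intro z ε hε
  have hs : (0:ℝ) < Real.sqrt d := Real.sqrt_pos.2 (by exact_mod_cast hd)
  obtain ⟨m, n, k, hk, hmn, happ⟩ := approx_aux (Real.sqrt d) hs z ε hε
  obtain ⟨a, ha, ha0⟩ := Submodule.exists_mem_ne_zero_of_ne_bot h𝔞
  have ha0' : (a : ℂ) ≠ 0 := fun h => ha0 (Subtype.ext h)
  have hζS : ((Real.sqrt d : ℂ) * Complex.I) ∈ (Subring.closure {((Real.sqrt d : ℂ) * Complex.I)}) := Subring.subset_closure rfl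
  set α : ↥(Subring.closure {((Real.sqrt d : ℂ) * Complex.I)}) := ⟨(m:ℂ) + (n:ℂ)*((Real.sqrt d : ℂ) * Complex.I),
    add_mem (intCast_mem _ m) (mul_mem (intCast_mem _ n) hζS)⟩ with hαdef
  have hαc : (α : ℂ) = (m:ℂ) + (n:ℂ)*((Real.sqrt d : ℂ) * Complex.I) := rfl
  have hα0 : (α : ℂ) ≠ 0 := by
    rw [hαc]
    intro h
    apply hmn
    have h1 := congrArg Complex.re h
    have h2 := congrArg Complex.im h
    simp at h1 h2
    refine ⟨by exact_mod_cast h1, ?_⟩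
    rcases h2 with h2 | h2
    · exact h2
    · omega
  set β : ↥(Subring.closure {((Real.sqrt d : ℂ) * Complex.I)}) := (k : ↥(Subring.closure {((Real.sqrt d : ℂ) * Complex.I)})) with hβdef
  have hβc : (β : ℂ) = (k : ℂ) := by rw [hβdef]; exact_mod_cast rfl
  have hβ0 : (β : ℂ) ≠ 0 := by
    rw [hβc]
    exact_mod_cast Nat.cast_ne_zero.2 hk.ne'
  set x₀ : ↥(Subring.closure {((Real.sqrt d : ℂ) * Complex.I)}) := α * a with hx₀def
  set y₀ : ↥(Subring.closure {((Real.sqrt d : ℂ) * Complex.I)}) := β * a with hy₀def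
  have hx₀ : x₀ ∈ 𝔞 := Ideal.mul_mem_left _ _ ha
  have hy₀ : y₀ ∈ 𝔞 := Ideal.mul_mem_left _ _ ha
  have hx₀0 : (x₀ : ℂ) ≠ 0 := by
    rw [hx₀def]; push_cast; exact mul_ne_zero hα0 ha0'
  have hy₀0 : (y₀ : ℂ) ≠ 0 := by
    rw [hy₀def]; push_cast; exact mul_ne_zero hβ0 ha0'
  have hinj : ∀ w : ↥(Subring.closure {((Real.sqrt d : ℂ) * Complex.I)}), (w : ℂ) ≠ 0 → Function.Injective (fun t : ℤ => (t : ↥(Subring.closure {((Real.sqrt d : ℂ) * Complex.I)})) * w) := by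
    intro w hw t1 t2 h
    have h' : (t1 : ℂ) * (w : ℂ) = (t2 : ℂ) * (w : ℂ) := by
      have := congrArg (fun u : ↥(Subring.closure {((Real.sqrt d : ℂ) * Complex.I)}) => (u : ℂ)) h
      push_cast at this
      exact this
    exact_mod_cast mul_right_cancel₀ hw h'
  have hbad : ({t : ℤ | (t : ↥(Subring.closure {((Real.sqrt d : ℂ) * Complex.I)})) * x₀ ∈ C} ∪ {t : ℤ | (t : ↥(Subring.closure {((Real.sqrt d : ℂ) * Complex.I)})) * y₀ ∈ C} ∪ {0}).Finite := by
    refine Set.Finite.union (Set.Finite.union ?_ ?_) (Set.finite_singleton 0)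
    · exact Set.Finite.preimage (Set.injOn_of_injective (hinj x₀ hx₀0)) hC
    · exact Set.Finite.preimage (Set.injOn_of_injective (hinj y₀ hy₀0)) hC
  obtain ⟨t, ht⟩ := hbad.infinite_compl.nonempty
  simp only [Set.mem_compl_iff, Set.mem_union, Set.mem_setOf_eq, Set.mem_singleton_iff,
    not_or] at ht
  obtain ⟨⟨htx, hty⟩, ht0⟩ := ht
  have ht0' : (t : ℂ) ≠ 0 := by exact_mod_cast ht0
  set x : ↥(Subring.closure {((Real.sqrt d : ℂ) * Complex.I)}) := (t : ↥(Subring.closure {((Real.sqrt d : ℂ) * Complex.I)})) * x₀ with hxdef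
  set y : ↥(Subring.closure {((Real.sqrt d : ℂ) * Complex.I)}) := (t : ↥(Subring.closure {((Real.sqrt d : ℂ) * Complex.I)})) * y₀ with hydef
  have hxcoe : (x : ℂ) = (t : ℂ) * ((α : ℂ) * (a : ℂ)) := by
    rw [hxdef, hx₀def]; push_cast; ring
  have hycoe : (y : ℂ) = (t : ℂ) * ((k : ℂ) * (a : ℂ)) := by
    rw [hydef, hy₀def]; push_cast [hβc]; try ring
  have hkC : (k : ℂ) ≠ 0 := by rw [← hβc]; exact hβ0
  have hy0 : (y : ℂ) ≠ 0 := by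
    rw [hycoe]
    exact mul_ne_zero ht0' (mul_ne_zero hkC ha0')
  have hquot : (x : ℂ) / (y : ℂ)
      = ((m:ℂ) + (n:ℂ)*((Real.sqrt d : ℂ) * Complex.I)) / (k : ℂ) := by
    rw [hxcoe, hycoe, hαc]
    field_simp
  refine ⟨(x : ℂ) / (y : ℂ), ?_, x, ⟨Ideal.mul_mem_left _ _ hx₀, htx⟩,
    y, ⟨Ideal.mul_mem_left _ _ hy₀, hty⟩, hy0, rfl⟩
  rw [Metric.mem_ball, Complex.dist_eq, hquot]
  exact happ
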